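/- Let α > 0, c ≥ 0 and a, b be real numbers with a ≥ α²/6 + (α/2)|b|. Let ζ₀, ζ₁, ζ₂, ζ₃ be real numbers satisfying ((α² + 6a)/2)(ζ₁² − 2ζ₀ζ₂) + 4ζ₂² − 6ζ₁ζ₃ ≥ 0. Then c·ζ₂² − (ac + (α²c/2))·ζ₀ζ₂ + (α²bc/2)·ζ₀ζ₁ + (α²ac/2)·ζ₀² − c·ζ₁ζ₃ + ac·ζ₁² ≥ 0. -/
import Mathlib


theorem ImZprime_nonneg (α c a b ζ₀ ζ₁ ζ₂ ζ₃ : ℝ) (hα : 0 < α) (hc : 0 ≤ c)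
    (ha : a ≥ α ^ 2 / 6 + (α / 2) * |b|)
    (hQ : ((α ^ 2 + 6 * a) / 2) * (ζ₁ ^ 2 - 2 * ζ₀ * ζ₂) + 4 * ζ₂ ^ 2 - 6 * ζ₁ * ζ₃ ≥ 0) :
    c * ζ₂ ^ 2 - (a * c + α ^ 2 * c / 2) * ζ₀ * ζ₂ + (α ^ 2 * b * c / 2) * ζ₀ * ζ₁ +
      (α ^ 2 * a * c / 2) * ζ₀ ^ 2 - c * ζ₁ * ζ₃ + a * c * ζ₁ ^ 2 ≥ 0 := by
  have hd2 : 0 ≤ a - α ^ 2 / 6 - (α / 2) * |b| := by linarith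
  have key : ζ₂ ^ 2 - (a + α ^ 2 / 2) * ζ₀ * ζ₂ + (α ^ 2 * b / 2) * ζ₀ * ζ₁ +
      (α ^ 2 * a / 2) * ζ₀ ^ 2 - ζ₁ * ζ₃ + a * ζ₁ ^ 2 ≥ 0 := by
    rcases abs_cases b with ⟨h1, _⟩ | ⟨h1, _⟩ <;> rw [h1] at hd2 <;>
    nlinarith [sq_nonneg (2 * ζ₂ - α ^ 2 * ζ₀),
      mul_nonneg hd2 (sq_nonneg (α * ζ₀ - ζ₁)),
      mul_nonneg hd2 (sq_nonneg (α * ζ₀ + ζ₁)),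
      mul_nonneg hα.le (sq_nonneg (α * ζ₀ - ζ₁)),
      mul_nonneg hα.le (sq_nonneg (α * ζ₀ + ζ₁)), hQ]
  nlinarith [mul_nonneg hc key]
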